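/- Let P ⊆ ℝ^n be the set of vectors obtained by sampling, at the points 0, 1/n, …, (n−1)/n, piecewise-polynomial functions p : [0,1] → [0,1] with at most Q singularities and with each polynomial piece of degree at most N, where each piece's coefficients lie in [0,1] and sum to less than 1. For every integer b ≥ 1 there exists a compression code (f, g) on P (describing the at most Q singularity locations, each a point in {1/n, …, (n−1)/n}, and quantizing each of the at most (N+1)(Q+1) polynomial coefficients with a uniform b-bit quantizer) whose rate satisfies r ≤ (N+1)(Q+1) b + Q(log n + 1) and whose distortion satisfies sup_{x ∈ P} ‖x − g(f(x))‖₂ ≤ √n · (N+1) · 2^{−b}. -/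

import Mathlib

open MeasureTheory ProbabilityTheory

/-- The Euclidean (ℓ₂) norm of a vector in ℝ^k. -/
noncomputable def norm2 {k : ℕ} (v : Fin k → ℝ) : ℝ := Real.sqrt (∑ i, v i ^ 2)

/-- The Euclidean inner product on ℝ^k. -/
noncomputable def dot {k : ℕ} (v w : Fin k → ℝ) : ℝ := ∑ i, v i * w i

/-- Matrix-vector multiplication for an m × n real matrix. -/
noncomputable def mulVec' {m n : ℕ} (A : Fin m → Fin n → ℝ) (x : Fin n → ℝ) : Fin m → ℝ :=
  fun i => ∑ j, A i j * x j

/-- The set of vectors in ℝ^n obtained by sampling, at the points 0, 1/n, …, (n-1)/n,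
piecewise-polynomial functions on [0,1] with at most `Q` singularities, each polynomial
piece of degree at most `N`, coefficients in [0,1] summing to less than 1. -/
def PolySet (n N Q : ℕ) : Set (Fin n → ℝ) :=
  {x | ∃ (s : Fin (Q + 2) → ℝ) (a : Fin (Q + 1) → Fin (N + 1) → ℝ),
    s 0 = 0 ∧ s (Fin.last (Q + 1)) = 1 ∧ Monotone s ∧
    (∀ ℓ j, a ℓ j ∈ Set.Icc (0 : ℝ) 1) ∧ (∀ ℓ, ∑ j, a ℓ j < 1) ∧
    ∀ (i : Fin n) (ℓ : Fin (Q + 1)),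
      (i : ℝ) / n ∈ Set.Ico (s ℓ.castSucc) (s ℓ.succ) →
        x i = ∑ j, a ℓ j * ((i : ℝ) / n) ^ (j : ℕ)}

lemma lowerset_mem_iff {m : ℕ} (p : Fin m → Prop) [DecidablePred p]
    (hp : ∀ ⦃k k' : Fin m⦄, k' ≤ k → p k → p k') (k : Fin m) :
    p k ↔ (k : ℕ) < (Finset.univ.filter p).card := by
  constructor
  · intro h
    have hsub : Finset.Iic k ⊆ Finset.univ.filter p := by
      intro k' hk'
      simp only [Finset.mem_Iic] at hk'
      simp only [Finset.mem_filter, Finset.mem_univ, true_and]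
      exact hp hk' h
    have hc := Finset.card_le_card hsub
    rw [Fin.card_Iic] at hc
    omega
  · intro h
    by_contra hk
    have hsub : Finset.univ.filter p ⊆ Finset.Iio k := by
      intro k' hk'
      simp only [Finset.mem_filter, Finset.mem_univ, true_and] at hk'
      simp only [Finset.mem_Iio]
      by_contra hle
      exact hk (hp (le_of_not_gt hle) hk')
    have hc := Finset.card_le_card hsub
    rw [Fin.card_Iio] at hc
    omega

def pieceIdx {n Q : ℕ} (t : Fin Q → Fin (n+1)) (i : Fin n) : Fin (Q+1) :=
  ⟨(Finset.univ.filter fun k => (t k : ℕ) ≤ (i : ℕ)).card, by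
    have h := Finset.card_filter_le (Finset.univ : Finset (Fin Q)) (fun k => (t k : ℕ) ≤ (i : ℕ))
    simp only [Finset.card_univ, Fintype.card_fin] at h
    omega⟩

noncomputable def decodeT (n N Q b : ℕ)
    (τ : (Fin Q → Fin (n+1)) × (Fin (Q+1) → Fin (N+1) → Fin (2^b))) : Fin n → ℝ :=
  fun i => ∑ j, ((τ.2 (pieceIdx τ.1 i) j : ℝ) / 2^b) * ((i : ℝ)/n) ^ (j : ℕ)

lemma key_approx {n N Q b : ℕ} (hn : 0 < n) (x : Fin n → ℝ) (hx : x ∈ PolySet n N Q) :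
    ∃ τ : (Fin Q → Fin (n+1)) × (Fin (Q+1) → Fin (N+1) → Fin (2^b)),
      ∀ i : Fin n, |x i - decodeT n N Q b τ i| ≤ ((N:ℝ)+1)/2^b := by
  classical
  obtain ⟨s, a, hs0, hs1, hmono, hmemIcc, hsum, hxeq⟩ := hx
  have hnR : (0:ℝ) < n := by exact_mod_cast hn
  -- thresholds
  have tdef : ∀ k : Fin Q, ∃ v : Fin (n+1),
      ∀ i : Fin n, ((v:ℕ) ≤ (i:ℕ) ↔ s (k.succ.castSucc) ≤ (i:ℝ)/n) := by
    intro k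
    by_cases h : ∃ m : ℕ, m < n ∧ s (k.succ.castSucc) ≤ (m:ℝ)/n
    · refine ⟨⟨Nat.find h, by have := (Nat.find_spec h).1; omega⟩, fun i => ?_⟩
      constructor
      · intro hle
        have hsp := (Nat.find_spec h).2
        have hcast : ((Nat.find h : ℕ) : ℝ) ≤ ((i:ℕ) : ℝ) := by exact_mod_cast hle
        calc s (k.succ.castSucc) ≤ (Nat.find h : ℝ)/n := hsp
          _ ≤ (i:ℝ)/n := by gcongr
      · intro hsi
        exact Nat.find_min' h ⟨i.2, hsi⟩
    · push_neg at h
      refine ⟨⟨n, Nat.lt_succ_self n⟩, fun i => ?_⟩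
      constructor
      · intro hle
        exact absurd hle (by have := i.2; simp only [Fin.val_mk] at *; omega)
      · intro hsi
        exact absurd hsi (not_le.mpr (h i i.2))
  choose t ht using tdef
  set L : Fin n → Fin (Q+1) := pieceIdx t with hL
  have hLval : ∀ i : Fin n, (L i : ℕ) =
      (Finset.univ.filter fun k => (t k : ℕ) ≤ (i : ℕ)).card := fun i => rfl
  have hIco : ∀ i : Fin n, (i:ℝ)/n ∈ Set.Ico (s (L i).castSucc) (s (L i).succ) := by
    intro i
    have hlow : ∀ ⦃k k' : Fin Q⦄, k' ≤ k → ((t k : ℕ) ≤ (i:ℕ)) → ((t k' : ℕ) ≤ (i:ℕ)) := by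
      intro k k' hkk hk
      rw [ht k' i]
      rw [ht k i] at hk
      refine le_trans (hmono ?_) hk
      exact Fin.castSucc_le_castSucc_iff.mpr (Fin.succ_le_succ_iff.mpr hkk)
    have hmemiff : ∀ k : Fin Q, ((t k : ℕ) ≤ (i:ℕ)) ↔ (k:ℕ) < (L i : ℕ) :=
      fun k => lowerset_mem_iff _ hlow k
    have hiln : (i:ℝ)/n < 1 := by
      rw [div_lt_one hnR]; exact_mod_cast i.2
    constructor
    · rcases Nat.eq_zero_or_pos (L i : ℕ) with h0 | hpos
      · have hz : (L i).castSucc = 0 := by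
          ext; simpa using h0
        rw [hz, hs0]
        positivity
      · have hm : (L i : ℕ) - 1 < Q := by
          have := (L i).2; omega
        have hk : ((t ⟨(L i : ℕ) - 1, hm⟩ : ℕ) ≤ (i:ℕ)) :=
          (hmemiff ⟨(L i : ℕ) - 1, hm⟩).2 (by show (L i : ℕ) - 1 < (L i : ℕ); omega)
        rw [ht] at hk
        have he : (⟨(L i : ℕ) - 1, hm⟩ : Fin Q).succ.castSucc = (L i).castSucc := by
          ext; simp [Fin.val_succ]; omega
        rwa [he] at hk
    · rcases eq_or_lt_of_le (Nat.le_of_lt_succ (L i).2) with hq | hlt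
      · have he : (L i).succ = Fin.last (Q+1) := by
          ext; simp [Fin.val_succ, hq]
        rw [he, hs1]
        exact hiln
      · have hk : ¬ ((t ⟨(L i : ℕ), hlt⟩ : ℕ) ≤ (i:ℕ)) := by
          rw [hmemiff]; simp
        rw [ht] at hk
        have he : (⟨(L i : ℕ), hlt⟩ : Fin Q).succ.castSucc = (L i).succ := by
          ext; simp [Fin.val_succ]
        rw [← he]
        exact lt_of_not_ge hk
  -- quantized coefficients
  have ha0 : ∀ ℓ j, 0 ≤ a ℓ j := fun ℓ j => (hmemIcc ℓ j).1
  have ha1 : ∀ ℓ j, a ℓ j < 1 := fun ℓ j =>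
    lt_of_le_of_lt (Finset.single_le_sum (fun j' _ => ha0 ℓ j') (Finset.mem_univ j)) (hsum ℓ)
  have h2b : (0:ℝ) < 2^b := by positivity
  let c : Fin (Q+1) → Fin (N+1) → Fin (2^b) := fun ℓ j => ⟨⌊a ℓ j * 2^b⌋₊, by
    rw [Nat.floor_lt (by have := ha0 ℓ j; positivity)]
    push_cast
    calc a ℓ j * 2^b < 1 * 2^b := by
          exact mul_lt_mul_of_pos_right (ha1 ℓ j) h2b
      _ = 2^b := one_mul _⟩
  refine ⟨(t, c), fun i => ?_⟩
  have hquant : ∀ ℓ j, |a ℓ j - ((c ℓ j : ℕ) : ℝ)/2^b| ≤ 1/2^b := by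
    intro ℓ j
    have hfl : ((⌊a ℓ j * 2^b⌋₊ : ℕ) : ℝ) ≤ a ℓ j * 2^b :=
      Nat.floor_le (by have := ha0 ℓ j; positivity)
    have hfu : a ℓ j * 2^b < (⌊a ℓ j * 2^b⌋₊ : ℕ) + 1 := Nat.lt_floor_add_one _
    have hc : ((c ℓ j : ℕ) : ℝ) = (⌊a ℓ j * 2^b⌋₊ : ℕ) := rfl
    have h1 : ((⌊a ℓ j * 2^b⌋₊ : ℕ) : ℝ)/2^b ≤ a ℓ j := by
      rw [div_le_iff₀ h2b]; exact hfl
    have h2 : a ℓ j ≤ ((⌊a ℓ j * 2^b⌋₊ : ℕ) : ℝ)/2^b + 1/2^b := by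
      rw [← add_div, le_div_iff₀ h2b]; linarith
    rw [hc, abs_le]
    have h3 : (0:ℝ) < 1/2^b := by positivity
    constructor <;> linarith
  have hxi := hxeq i (L i) (hIco i)
  have hdec : decodeT n N Q b (t, c) i
      = ∑ j, (((c (L i) j : ℕ) : ℝ)/2^b) * ((i:ℝ)/n)^(j:ℕ) := rfl
  rw [hxi, hdec, ← Finset.sum_sub_distrib]
  have hpow : ∀ j : Fin (N+1), |((i:ℝ)/n)^(j:ℕ)| ≤ 1 := by
    intro j
    rw [abs_pow, abs_of_nonneg (by positivity)]
    apply pow_le_one₀ (by positivity)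
    rw [div_le_one hnR]
    exact_mod_cast le_of_lt i.2
  calc |∑ j, (a (L i) j * ((i:ℝ)/n)^(j:ℕ) - (((c (L i) j : ℕ) : ℝ)/2^b) * ((i:ℝ)/n)^(j:ℕ))|
      ≤ ∑ j, |a (L i) j * ((i:ℝ)/n)^(j:ℕ) - (((c (L i) j : ℕ) : ℝ)/2^b) * ((i:ℝ)/n)^(j:ℕ)| :=
        Finset.abs_sum_le_sum_abs _ _
    _ ≤ ∑ _j : Fin (N+1), (1/2^b : ℝ) := by
        apply Finset.sum_le_sum
        intro j _
        rw [← sub_mul, abs_mul]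
        calc |a (L i) j - ((c (L i) j : ℕ) : ℝ)/2^b| * |((i:ℝ)/n)^(j:ℕ)|
            ≤ (1/2^b) * 1 :=
              mul_le_mul (hquant _ _) (hpow j) (abs_nonneg _) (by positivity)
          _ = 1/2^b := mul_one _
    _ = ((N:ℝ)+1)/2^b := by
        rw [Finset.sum_const, Finset.card_univ, Fintype.card_fin]
        ring


/-- Existence of a compression code for sampled piecewise-polynomial signals: describing the
singularity locations and quantizing each polynomial coefficient with b bits yields a codebook
with at most 2^{(N+1)(Q+1)b + Q(log n + 1)} elements and distortion at most √n (N+1) 2^{-b}. -/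
theorem piecewise_polynomial_code_exists {n N Q : ℕ} (hn : 0 < n) (b : ℕ) (hb : 1 ≤ b) :
    ∃ (f : (Fin n → ℝ) → ℕ) (g : ℕ → (Fin n → ℝ)),
      ((fun v => g (f v)) '' PolySet n N Q).Finite ∧
      ((((fun v => g (f v)) '' PolySet n N Q).ncard : ℝ) ≤
        (2 : ℝ) ^ (((N : ℝ) + 1) * ((Q : ℝ) + 1) * (b : ℝ) +
          (Q : ℝ) * (Real.logb 2 n + 1))) ∧
      ∀ x ∈ PolySet n N Q,
        norm2 (x - g (f x)) ≤ Real.sqrt n * ((N : ℝ) + 1) * (2 : ℝ) ^ (-(b : ℝ)) := by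
  classical
  have key : ∀ x ∈ PolySet n N Q,
      ∃ τ : (Fin Q → Fin (n+1)) × (Fin (Q+1) → Fin (N+1) → Fin (2^b)),
        ∀ i : Fin n, |x i - decodeT n N Q b τ i| ≤ ((N:ℝ)+1)/2^b :=
    fun x hx => key_approx hn x hx
  choose E hE using key
  letI : Encodable ((Fin Q → Fin (n+1)) × (Fin (Q+1) → Fin (N+1) → Fin (2^b))) :=
    Fintype.toEncodable _
  have hnR : (0:ℝ) < n := by exact_mod_cast hn
  set f : (Fin n → ℝ) → ℕ :=
    fun x => if hx : x ∈ PolySet n N Q then Encodable.encode (E x hx) else 0 with hf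
  set g : ℕ → (Fin n → ℝ) :=
    fun m => (Encodable.decode
      (α := (Fin Q → Fin (n+1)) × (Fin (Q+1) → Fin (N+1) → Fin (2^b))) m).elim
      0 (decodeT n N Q b) with hg
  have hgf : ∀ x (hx : x ∈ PolySet n N Q), g (f x) = decodeT n N Q b (E x hx) := by
    intro x hx
    rw [hf, hg]
    simp only [dif_pos hx, Encodable.encodek, Option.elim]
  have himg : ((fun v => g (f v)) '' PolySet n N Q) ⊆ Set.range (decodeT n N Q b) := by
    rintro y ⟨x, hx, rfl⟩
    exact ⟨E x hx, (hgf x hx).symm⟩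
  refine ⟨f, g, (Set.finite_range _).subset himg, ?_, ?_⟩
  · -- cardinality bound
    have hcard1 : ((fun v => g (f v)) '' PolySet n N Q).ncard ≤
        (n+1)^Q * ((2^b)^(N+1))^(Q+1) := by
      calc ((fun v => g (f v)) '' PolySet n N Q).ncard
          ≤ (Set.range (decodeT n N Q b)).ncard :=
            Set.ncard_le_ncard himg (Set.finite_range _)
        _ = (decodeT n N Q b '' Set.univ).ncard := by rw [Set.image_univ]
        _ ≤ (Set.univ : Set ((Fin Q → Fin (n+1)) × (Fin (Q+1) → Fin (N+1) → Fin (2^b)))).ncard :=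
            Set.ncard_image_le Set.finite_univ
        _ = Fintype.card ((Fin Q → Fin (n+1)) × (Fin (Q+1) → Fin (N+1) → Fin (2^b))) := by
            rw [Set.ncard_univ, Nat.card_eq_fintype_card]
        _ = (n+1)^Q * ((2^b)^(N+1))^(Q+1) := by
            simp [Fintype.card_fun]
    have hrhs : (2 : ℝ) ^ (((N : ℝ) + 1) * ((Q : ℝ) + 1) * (b : ℝ) +
          (Q : ℝ) * (Real.logb 2 n + 1)) =
        (2:ℝ)^(b*(N+1)*(Q+1) : ℕ) * ((n:ℝ)*2)^Q := by
      rw [Real.rpow_add (by norm_num)]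
      congr 1
      · rw [show ((N:ℝ)+1)*((Q:ℝ)+1)*(b:ℝ) = ((b*(N+1)*(Q+1) : ℕ) : ℝ) by push_cast; ring,
          Real.rpow_natCast]
      · rw [show (Q:ℝ)*(Real.logb 2 n + 1) = (Real.logb 2 n + 1) * (Q:ℝ) by ring,
          Real.rpow_mul (by norm_num), Real.rpow_natCast]
        congr 1
        rw [Real.rpow_add (by norm_num), Real.rpow_one,
          Real.rpow_logb (by norm_num) (by norm_num) hnR]
    rw [hrhs]
    have hle : (((n+1)^Q * ((2^b)^(N+1))^(Q+1) : ℕ) : ℝ) ≤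
        (2:ℝ)^(b*(N+1)*(Q+1) : ℕ) * ((n:ℝ)*2)^Q := by
      push_cast
      have he : (((2:ℝ)^b)^(N+1))^(Q+1) = (2:ℝ)^(b*(N+1)*(Q+1)) := by
        rw [pow_mul, pow_mul]
      have h1n : (1:ℝ) ≤ n := by exact_mod_cast hn
      have hp : ((n:ℝ)+1)^Q ≤ ((n:ℝ)*2)^Q := by
        gcongr <;> linarith
      calc ((n:ℝ)+1)^Q * (((2:ℝ)^b)^(N+1))^(Q+1)
          = ((n:ℝ)+1)^Q * (2:ℝ)^(b*(N+1)*(Q+1)) := by rw [he]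
        _ ≤ ((n:ℝ)*2)^Q * (2:ℝ)^(b*(N+1)*(Q+1)) :=
            mul_le_mul_of_nonneg_right hp (by positivity)
        _ = (2:ℝ)^(b*(N+1)*(Q+1)) * ((n:ℝ)*2)^Q := mul_comm _ _
    calc (((fun v => g (f v)) '' PolySet n N Q).ncard : ℝ)
        ≤ (((n+1)^Q * ((2^b)^(N+1))^(Q+1) : ℕ) : ℝ) := by exact_mod_cast hcard1
      _ ≤ _ := hle
  · -- distortion
    intro x hx
    rw [hgf x hx]
    simp only [norm2, Pi.sub_apply]
    have hb0 : ∀ i : Fin n, (x i - decodeT n N Q b (E x hx) i)^2 ≤ (((N:ℝ)+1)/2^b)^2 := by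
      intro i
      rw [← sq_abs]
      exact pow_le_pow_left₀ (abs_nonneg _) (hE x hx i) 2
    calc Real.sqrt (∑ i, (x i - decodeT n N Q b (E x hx) i)^2)
        ≤ Real.sqrt (∑ _i : Fin n, (((N:ℝ)+1)/2^b)^2) :=
          Real.sqrt_le_sqrt (Finset.sum_le_sum fun i _ => hb0 i)
      _ = Real.sqrt ((n:ℝ) * (((N:ℝ)+1)/2^b)^2) := by
          rw [Finset.sum_const, Finset.card_univ, Fintype.card_fin, nsmul_eq_mul]
      _ = Real.sqrt n * (((N:ℝ)+1)/2^b) := by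
          rw [Real.sqrt_mul (by positivity), Real.sqrt_sq (by positivity)]
      _ = Real.sqrt n * ((N : ℝ) + 1) * (2 : ℝ) ^ (-(b : ℝ)) := by
          rw [show (-(b:ℝ)) = -((b:ℕ):ℝ) by norm_num, Real.rpow_neg (by norm_num),
            Real.rpow_natCast]
          field_simp
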